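/- Suppose that for every node set S of size at most k, |n·F_R(S) − E[I(S)]| < (ε/2)·OPT, and that S_k is a node set of size k satisfying F_R(S_k) ≥ (1−1/e)·F_R(S) for all size-k sets S (a (1−1/e)-approximate maximizer of coverage). Then E[I(S_k)] > (1 − 1/e − ε)·OPT. -/
import Mathlib


/-- Deterministic core of Theorem 1 of Tang–Xiao–Shi: if `n·F_R(S)` estimates the expected
spread `EI S` within `(ε/2)·OPT` for every node set `S` of size at most `k`, and `Sk` is a
size-`k` `(1-1/e)`-approximate maximizer of the coverage `F_R`, then
`EI Sk > (1 - 1/e - ε)·OPT`. -/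
theorem approx_coverage_gives_approx_spread
    {V : Type*} [DecidableEq V] [Fintype V]
    (n k : ℕ) (hn : n = Fintype.card V) (hk : 1 ≤ k)
    (F EI : Finset V → ℝ) (ε OPT : ℝ) (hε0 : 0 < ε) (hε1 : ε < 1)
    (hOPT : IsGreatest (EI '' {S : Finset V | S.card = k}) OPT)
    (herr : ∀ S : Finset V, S.card ≤ k → |(n : ℝ) * F S - EI S| < ε/2 * OPT)
    (Sk : Finset V) (hSk : Sk.card = k)
    (happrox : ∀ S : Finset V, S.card = k → (1 - 1/Real.exp 1) * F S ≤ F Sk) :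
    (1 - 1/Real.exp 1 - ε) * OPT < EI Sk := by
  obtain ⟨⟨Sstar, hcard, hEI⟩, -⟩ := hOPT
  simp only [Set.mem_setOf_eq] at hcard
  have hOPTpos : 0 < OPT := by
    have h0 := herr ∅ (by simp)
    have := abs_nonneg ((n : ℝ) * F ∅ - EI ∅)
    nlinarith
  have hexp : (1 : ℝ) < Real.exp 1 := by
    have := Real.add_one_le_exp 1; linarith
  have he : 0 < 1 - 1 / Real.exp 1 := by
    have : 1 / Real.exp 1 < 1 := by
      rw [div_lt_one (by positivity)]; exact hexp
    linarith
  have he' : 1 - 1 / Real.exp 1 ≤ 1 := by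
    have : (0:ℝ) < 1 / Real.exp 1 := by positivity
    linarith
  have h1 := herr Sk (le_of_eq hSk)
  have h2 := herr Sstar (le_of_eq hcard)
  rw [abs_lt] at h1 h2
  have h3 := happrox Sstar hcard
  have hn0 : (0 : ℝ) ≤ n := Nat.cast_nonneg n
  -- n * F Sk ≥ (1-1/e) * (n * F Sstar)
  have h4 : (1 - 1/Real.exp 1) * ((n : ℝ) * F Sstar) ≤ (n : ℝ) * F Sk := by
    have := mul_le_mul_of_nonneg_left h3 hn0
    nlinarith
  nlinarith [mul_lt_mul_of_pos_left h2.2 he, hEI]
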